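/- Let m be a continuous topological partial action of a Polish group G on a Polish space X with G*X a G_δ subset of G × X. Then the orbit equivalence relation \widehat{E}^p_G of the partial action \widehat{m} on G × X is G_δ in (G × X)², and it admits a Borel selector. -/

import Mathlib

structure PartialAction (G : Type*) (X : Type*) [Group G] where
  dom : G → Set X
  act : G → X → X
  mem_dom_one : ∀ x, x ∈ dom 1
  act_one : ∀ x, act 1 x = x
  mem_dom_inv : ∀ g x, x ∈ dom g → act g x ∈ dom g⁻¹
  act_inv_act : ∀ g x, x ∈ dom g → act g⁻¹ (act g x) = x
  mem_dom_mul : ∀ g h x, x ∈ dom h → act h x ∈ dom g → x ∈ dom (g * h)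
  act_mul : ∀ g h x, x ∈ dom h → act h x ∈ dom g → act (g * h) x = act g (act h x)

namespace PartialAction

variable {G X : Type*} [Group G]

/-- The orbit equivalence relation `E^p_G` of a partial action. -/
def orbitRel (pa : PartialAction G X) (x y : X) : Prop :=
  ∃ g, x ∈ pa.dom g ∧ pa.act g x = y

/-- `G^x = {g : G | g · x is defined}`. -/
def stabDom (pa : PartialAction G X) (x : X) : Set G := {g | x ∈ pa.dom g}

/-- The orbit equivalence relation of the partial action `\widehat m` on `G × X`,
`\widehat m_u (h, x) = (h u⁻¹, u · x)`. -/
def hatOrbitRel (pa : PartialAction G X) (p q : G × X) : Prop :=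
  ∃ u, p.2 ∈ pa.dom u ∧ q = (p.1 * u⁻¹, pa.act u p.2)

/-- Vaught transform `A^{△V}`. -/
def vaughtDelta [TopologicalSpace G] (pa : PartialAction G X) (A : Set X) (V : Set G) : Set X :=
  {x | ¬ IsMeagre {g : ↥(V ∩ pa.stabDom x) | pa.act (g : G) x ∈ A}}

/-- Vaught transform `A^{*V}`. -/
def vaughtStar [TopologicalSpace G] (pa : PartialAction G X) (A : Set X) (V : Set G) : Set X :=
  {x | {g : ↥(V ∩ pa.stabDom x) | pa.act (g : G) x ∈ A} ∈ residual ↥(V ∩ pa.stabDom x)}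

end PartialAction

open Set Filter Topology Metric

namespace HatSel

variable {G X : Type*} [Group G]

theorem hat_refl (pa : PartialAction G X) (p : G × X) : pa.hatOrbitRel p p := by
  refine ⟨1, pa.mem_dom_one _, ?_⟩
  simp [pa.act_one]

theorem hat_symm (pa : PartialAction G X) {p q : G × X} (h : pa.hatOrbitRel p q) :
    pa.hatOrbitRel q p := by
  obtain ⟨u, hu, rfl⟩ := h
  refine ⟨u⁻¹, pa.mem_dom_inv u p.2 hu, ?_⟩
  simp [pa.act_inv_act u p.2 hu, mul_assoc]

theorem hat_trans (pa : PartialAction G X) {p q r : G × X} (h1 : pa.hatOrbitRel p q)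
    (h2 : pa.hatOrbitRel q r) : pa.hatOrbitRel p r := by
  obtain ⟨u, hu, rfl⟩ := h1
  obtain ⟨v, hv, rfl⟩ := h2
  simp only at hv ⊢
  refine ⟨v * u, pa.mem_dom_mul v u p.2 hu hv, ?_⟩
  rw [pa.act_mul v u p.2 hu hv, mul_inv_rev, mul_assoc]

theorem hat_iff (pa : PartialAction G X) (p q : G × X) :
    pa.hatOrbitRel p q ↔ p.2 ∈ pa.dom (q.1⁻¹ * p.1) ∧ q.2 = pa.act (q.1⁻¹ * p.1) p.2 := by
  constructor
  · rintro ⟨u, hu, rfl⟩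
    have h : (p.1 * u⁻¹)⁻¹ * p.1 = u := by group
    simp only [h]
    exact ⟨hu, trivial⟩
  · rintro ⟨h1, h2⟩
    refine ⟨q.1⁻¹ * p.1, h1, ?_⟩
    have h : p.1 * (q.1⁻¹ * p.1)⁻¹ = q.1 := by group
    rw [h, ← h2]


section Topo

variable [TopologicalSpace G] [IsTopologicalGroup G] [TopologicalSpace X]

theorem isGδ_preimage {α β : Type*} [TopologicalSpace α] [TopologicalSpace β]
    {s : Set β} (hs : IsGδ s) {f : α → β} (hf : Continuous f) : IsGδ (f ⁻¹' s) := by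
  obtain ⟨O, hO, rfl⟩ := hs.eq_iInter_nat
  rw [Set.preimage_iInter]
  exact IsGδ.iInter_of_isOpen fun n => (hO n).preimage hf

theorem hat_gdelta [PolishSpace G] [PolishSpace X]
    (pa : PartialAction G X)
    (hcont : ContinuousOn (fun p : G × X => pa.act p.1 p.2) {p : G × X | p.2 ∈ pa.dom p.1})
    (hGδ : IsGδ {p : G × X | p.2 ∈ pa.dom p.1}) :
    IsGδ {pq : (G × X) × (G × X) | pa.hatOrbitRel pq.1 pq.2} := by
  letI : MetricSpace ((G × X) × (G × X)) := TopologicalSpace.metrizableSpaceMetric _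
  set D : Set (G × X) := {p : G × X | p.2 ∈ pa.dom p.1} with hD
  set Ψ : (G × X) × (G × X) → G × X := fun z => (z.2.1⁻¹ * z.1.1, z.1.2) with hΨdef
  have hΨ : Continuous Ψ := by
    apply Continuous.prodMk
    · exact (continuous_snd.fst.inv).mul continuous_fst.fst
    · exact continuous_fst.snd
  have hs : IsGδ (Ψ ⁻¹' D) := isGδ_preimage hGδ hΨ
  set f : (G × X) × (G × X) → X := fun z => pa.act (Ψ z).1 (Ψ z).2 with hfdef
  have hf : ContinuousOn f (Ψ ⁻¹' D) := hcont.comp hΨ.continuousOn fun z hz => hz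
  have hcl : IsClosed {w : ↥(Ψ ⁻¹' D) | ((w : (G × X) × (G × X)).2.2 = f w)} := by
    apply isClosed_eq
    · exact (continuous_subtype_val.snd).snd
    · exact hf.restrict
  obtain ⟨t, htc, hteq⟩ := isClosed_induced_iff.mp hcl
  have hE : {pq : (G × X) × (G × X) | pa.hatOrbitRel pq.1 pq.2} = (Ψ ⁻¹' D) ∩ t := by
    ext z
    constructor
    · intro hz
      obtain ⟨h1, h2⟩ := (hat_iff pa z.1 z.2).mp hz
      have hzD : z ∈ Ψ ⁻¹' D := h1
      have : (⟨z, hzD⟩ : ↥(Ψ ⁻¹' D)) ∈ Subtype.val ⁻¹' t := by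
        rw [hteq]; exact h2
      exact ⟨hzD, this⟩
    · rintro ⟨hzD, hzt⟩
      have : (⟨z, hzD⟩ : ↥(Ψ ⁻¹' D)) ∈ Subtype.val ⁻¹' t := hzt
      rw [hteq] at this
      exact (hat_iff pa z.1 z.2).mpr ⟨hzD, this⟩
  rw [hE]
  exact hs.inter htc.isGδ

theorem hat_open (pa : PartialAction G X)
    (hdom : ∀ g, IsOpen (pa.dom g))
    (hcont : ContinuousOn (fun p : G × X => pa.act p.1 p.2) {p : G × X | p.2 ∈ pa.dom p.1}) :
    ∀ U : Set (G × X), IsOpen U →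
      IsOpen {p : G × X | ∃ q, pa.hatOrbitRel p q ∧ q ∈ U} := by
  intro U hU
  have heq : {p : G × X | ∃ q, pa.hatOrbitRel p q ∧ q ∈ U} =
      ⋃ v : G, ((Prod.snd ⁻¹' pa.dom v) ∩
        (fun p : G × X => (p.1 * v⁻¹, pa.act v p.2)) ⁻¹' U) := by
    ext p
    simp only [mem_setOf_eq, mem_iUnion, mem_inter_iff, mem_preimage]
    constructor
    · rintro ⟨q, ⟨v, hv, rfl⟩, hqU⟩; exact ⟨v, hv, hqU⟩
    · rintro ⟨v, hv, hU'⟩; exact ⟨_, ⟨v, hv, rfl⟩, hU'⟩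
  rw [heq]
  refine isOpen_iUnion fun v => ?_
  have h1 : ContinuousOn (fun x : X => pa.act v x) (pa.dom v) := by
    have hmk : Continuous (fun x : X => ((v, x) : G × X)) := Continuous.prodMk_right v
    exact hcont.comp hmk.continuousOn fun x hx => hx
  have hφ : ContinuousOn (fun p : G × X => (p.1 * v⁻¹, pa.act v p.2))
      (Prod.snd ⁻¹' pa.dom v) := by
    apply ContinuousOn.prodMk
    · exact (continuous_fst.mul continuous_const).continuousOn
    · exact h1.comp continuous_snd.continuousOn fun p hp => hp
  exact hφ.isOpen_inter_preimage ((hdom v).preimage continuous_snd) hU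

end Topo

section Selector

variable {P : Type*} [MetricSpace P]

/-- Basic balls indexed by `ℕ` via pairing: centers from a sequence `u`, radii `(1/2)^n`. -/
noncomputable def bset (u : ℕ → P) (j : ℕ) : Set P :=
  Metric.ball (u (Nat.unpair j).1) ((1 / 2 : ℝ) ^ (Nat.unpair j).2)

/-- Recursion condition for the invariant ball scheme. -/
def condS (u : ℕ → P) (O : ℕ → Set (P × P)) (c : Set P) (k l j : ℕ) : Prop :=
  (bset u j ∩ c).Nonempty ∧ k + 1 ≤ (Nat.unpair j).2 ∧ closure (bset u j) ⊆ bset u l ∧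
    ((bset u (Nat.unpair k).2 ∩ c).Nonempty →
      ∃ i i' : ℕ, bset u i ×ˢ bset u i' ⊆ O (Nat.unpair k).1 ∧
        closure (bset u j) ⊆ bset u i' ∧ (bset u (Nat.unpair k).2 ∩ bset u i ∩ c).Nonempty)

open Classical in
/-- The invariant sequence of chosen basic balls. -/
noncomputable def jseqS (u : ℕ → P) (O : ℕ → Set (P × P)) (c : Set P) : ℕ → ℕ
  | 0 => if h : ∃ j, (bset u j ∩ c).Nonempty then Nat.find h else 0
  | k + 1 => if h : ∃ j, condS u O c k (jseqS u O c k) j then Nat.find h else 0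

theorem baire_pick [CompleteSpace P] (c : Set P) (hc : c.Nonempty)
    (W : ℕ → Set P) (hWo : ∀ n, IsOpen (W n))
    (hWd : ∀ n, ∀ x ∈ c, ∀ ε > 0, ∃ y ∈ c, dist y x < ε ∧ y ∈ W n) :
    ∃ r : P, ∀ n, r ∈ W n := by
  classical
  have step : ∀ (x : P) (r : ℝ), x ∈ c → 0 < r → ∀ k : ℕ,
      ∃ y ρ, y ∈ c ∧ 0 < ρ ∧ ρ ≤ (1 / 2 : ℝ) ^ k ∧
        Metric.closedBall y ρ ⊆ Metric.ball x r ∩ W k := by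
    intro x r hx hr k
    obtain ⟨y, hyc, hyd, hyW⟩ := hWd k x hx (r / 2) (by linarith)
    have hy : y ∈ Metric.ball x r ∩ W k :=
      ⟨mem_ball.2 (lt_of_lt_of_le hyd (by linarith)), hyW⟩
    obtain ⟨ε, hε, hsub⟩ := Metric.isOpen_iff.1 (isOpen_ball.inter (hWo k)) y hy
    refine ⟨y, min ((1 / 2 : ℝ) ^ k) (ε / 2), hyc, by positivity, min_le_left _ _, ?_⟩
    exact (Metric.closedBall_subset_ball
      (lt_of_le_of_lt (min_le_right _ _) (by linarith))).trans hsub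
  obtain ⟨x₀, hx₀⟩ := hc
  let D := {xr : P × ℝ // xr.1 ∈ c ∧ 0 < xr.2}
  let next : ℕ → D → D := fun k d =>
    let h := step d.1.1 d.1.2 d.2.1 d.2.2 k
    ⟨⟨h.choose, h.choose_spec.choose⟩,
      h.choose_spec.choose_spec.1, h.choose_spec.choose_spec.2.1⟩
  let f : ℕ → D := fun k => Nat.rec ⟨(x₀, 1), hx₀, one_pos⟩ (fun k ih => next k ih) k
  have hprop : ∀ k, (f (k + 1)).1.2 ≤ (1 / 2 : ℝ) ^ k ∧
      Metric.closedBall (f (k + 1)).1.1 (f (k + 1)).1.2 ⊆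
        Metric.ball (f k).1.1 (f k).1.2 ∩ W k := by
    intro k
    exact ⟨(step (f k).1.1 (f k).1.2 (f k).2.1 (f k).2.2 k).choose_spec.choose_spec.2.2.1,
      (step (f k).1.1 (f k).1.2 (f k).2.1 (f k).2.2 k).choose_spec.choose_spec.2.2.2⟩
  have hnest : ∀ k, Metric.closedBall (f (k + 1)).1.1 (f (k + 1)).1.2 ⊆
      Metric.closedBall (f k).1.1 (f k).1.2 :=
    fun k => ((hprop k).2.trans inter_subset_left).trans Metric.ball_subset_closedBall
  have hmono : ∀ k n, k ≤ n → Metric.closedBall (f n).1.1 (f n).1.2 ⊆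
      Metric.closedBall (f k).1.1 (f k).1.2 := by
    intro k n h
    induction h with
    | refl => exact subset_rfl
    | step h ih => exact (hnest _).trans ih
  have hmem : ∀ k, (f k).1.1 ∈ Metric.closedBall (f k).1.1 (f k).1.2 :=
    fun k => Metric.mem_closedBall_self (le_of_lt (f k).2.2)
  have hcauchy : CauchySeq (fun k => (f k).1.1) := by
    rw [Metric.cauchySeq_iff']
    intro ε hε
    obtain ⟨N, hN⟩ := exists_pow_lt_of_lt_one hε (by norm_num : (1 / 2 : ℝ) < 1)
    refine ⟨N + 1, fun n hn => ?_⟩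
    have h1 : (f n).1.1 ∈ Metric.closedBall (f (N + 1)).1.1 (f (N + 1)).1.2 :=
      hmono (N + 1) n hn (hmem n)
    have h2 : dist (f n).1.1 (f (N + 1)).1.1 ≤ (f (N + 1)).1.2 := mem_closedBall.1 h1
    exact lt_of_le_of_lt (h2.trans (hprop N).1) hN
  have : Nonempty P := ⟨x₀⟩
  refine ⟨limUnder atTop (fun k => (f k).1.1), fun n => ?_⟩
  have hlim := hcauchy.tendsto_limUnder
  have hin : limUnder atTop (fun k => (f k).1.1) ∈
      Metric.closedBall (f (n + 1)).1.1 (f (n + 1)).1.2 := by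
    apply Metric.isClosed_closedBall.mem_of_tendsto hlim
    filter_upwards [eventually_ge_atTop (n + 1)] with m hm
    exact hmono (n + 1) m hm (hmem m)
  exact ((hprop n).2 hin).2


theorem selector_aux {P : Type*} [MetricSpace P] [CompleteSpace P]
    [SecondCountableTopology P] [MeasurableSpace P] [BorelSpace P] [Nonempty P]
    (E : P → P → Prop) (hrefl : ∀ p, E p p) (hsymm : ∀ p q, E p q → E q p)
    (htrans : ∀ p q r, E p q → E q r → E p r)
    (hEg : IsGδ {z : P × P | E z.1 z.2})
    (hopen : ∀ U : Set P, IsOpen U → IsOpen {p | ∃ q, E p q ∧ q ∈ U}) :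
    ∃ S : P → P, Measurable S ∧ (∀ p, E (S p) p) ∧ ∀ p q, E p q ↔ S p = S q := by
  classical
  obtain ⟨u, hu⟩ := TopologicalSpace.exists_dense_seq P
  obtain ⟨O, hO, hOE⟩ := hEg.eq_iInter_nat
  set C : P → Set P := fun p => {q | E p q} with hC
  -- E-related points are in every O n
  have hEsub : ∀ n (a b : P), E a b → (a, b) ∈ O n := by
    intro n a b h
    have : (a, b) ∈ {z : P × P | E z.1 z.2} := h
    rw [hOE] at this
    exact mem_iInter.mp this n
  have hEiff : ∀ a b : P, E a b ↔ ∀ n, (a, b) ∈ O n := by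
    intro a b
    constructor
    · exact fun h n => hEsub n a b h
    · intro h
      have : (a, b) ∈ ⋂ n, O n := mem_iInter.mpr h
      rw [← hOE] at this
      exact this
  -- basic facts about the balls
  have hbopen : ∀ j : ℕ, IsOpen (bset u j) := fun j => isOpen_ball
  have hbctr : ∀ j : ℕ, u (Nat.unpair j).1 ∈ bset u j :=
    fun j => mem_ball_self (by positivity)
  have hbsmall : ∀ (a : P) (U : Set P), IsOpen U → a ∈ U → ∀ K : ℕ,
      ∃ j, K ≤ (Nat.unpair j).2 ∧ a ∈ bset u j ∧ closure (bset u j) ⊆ U := by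
    intro a U hUo haU K
    obtain ⟨ε, hε, hball⟩ := Metric.isOpen_iff.1 hUo a haU
    obtain ⟨N₀, hN₀⟩ := exists_pow_lt_of_lt_one (by positivity : (0:ℝ) < ε / 2)
      (by norm_num : (1 / 2 : ℝ) < 1)
    set N := max N₀ K with hNdef
    have hN : ((1:ℝ) / 2) ^ N < ε / 2 :=
      lt_of_le_of_lt (pow_le_pow_of_le_one (by norm_num) (by norm_num) (le_max_left _ _)) hN₀
    obtain ⟨m, hm⟩ := hu.exists_dist_lt a (by positivity : (0:ℝ) < (1 / 2 : ℝ) ^ N)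
    refine ⟨Nat.pair m N, ?_, ?_, ?_⟩
    · simp only [Nat.unpair_pair]
      exact le_max_right _ _
    · simp only [bset, Nat.unpair_pair]
      exact mem_ball.2 hm
    · intro z hz
      simp only [bset, Nat.unpair_pair] at hz
      have hz' : dist z (u m) ≤ (1 / 2 : ℝ) ^ N :=
        mem_closedBall.1 (Metric.closure_ball_subset_closedBall hz)
      apply hball
      have htri : dist z a ≤ dist z (u m) + dist (u m) a := dist_triangle _ _ _
      have hma : dist (u m) a < (1 / 2 : ℝ) ^ N := by rw [dist_comm]; exact hm
      exact mem_ball.2 (by nlinarith)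
  -- nonemptiness of classes intersected with opens is an open condition
  have hNopen : ∀ U : Set P, IsOpen U → IsOpen {p | (U ∩ C p).Nonempty} := by
    intro U hUo
    have : {p | (U ∩ C p).Nonempty} = {p | ∃ q, E p q ∧ q ∈ U} := by
      ext p
      exact ⟨fun ⟨q, h1, h2⟩ => ⟨q, h2, h1⟩, fun ⟨q, h1, h2⟩ => ⟨q, h2, h1⟩⟩
    rw [this]
    exact hopen U hUo
  have hCC : ∀ p q, E p q → C p = C q := by
    intro p q h
    ext r
    exact ⟨fun hr => htrans _ _ _ (hsymm _ _ h) hr, fun hr => htrans _ _ _ h hr⟩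
  -- existence of suitable balls at every stage
  have hex0 : ∀ p, ∃ j, (bset u j ∩ C p).Nonempty := by
    intro p
    obtain ⟨j, _, hj, _⟩ := hbsmall p univ isOpen_univ (mem_univ p) 0
    exact ⟨j, ⟨p, hj, hrefl p⟩⟩
  have hexS : ∀ p k l, (bset u l ∩ C p).Nonempty → ∃ j, condS u O (C p) k l j := by
    intro p k l ⟨a, hab, hac⟩
    by_cases hm : (bset u (Nat.unpair k).2 ∩ C p).Nonempty
    · obtain ⟨r, hrb, hrc⟩ := hm
      have hra : E r a := htrans _ _ _ (hsymm _ _ hrc) hac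
      have hrO : (r, a) ∈ O (Nat.unpair k).1 := hEsub _ _ _ hra
      obtain ⟨U, V, hUo, hVo, hrU, haV, hUV⟩ :=
        isOpen_prod_iff.1 (hO (Nat.unpair k).1) r a hrO
      obtain ⟨i, _, hri, hiU⟩ := hbsmall r U hUo hrU 0
      obtain ⟨i', _, hai', hi'V⟩ := hbsmall a V hVo haV 0
      obtain ⟨j, hjK, haj, hjsub⟩ := hbsmall a (bset u l ∩ bset u i')
        ((hbopen l).inter (hbopen i')) ⟨hab, hai'⟩ (k + 1)
      refine ⟨j, ⟨a, haj, hac⟩, hjK, fun z hz => (hjsub hz).1, fun _ => ⟨i, i', ?_, ?_, ?_⟩⟩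
      · intro z hz
        exact hUV ⟨hiU (subset_closure hz.1), hi'V (subset_closure hz.2)⟩
      · exact fun z hz => (hjsub hz).2
      · exact ⟨r, ⟨hrb, hri⟩, hrc⟩
    · obtain ⟨j, hjK, haj, hjsub⟩ := hbsmall a (bset u l) (hbopen l) hab (k + 1)
      exact ⟨j, ⟨a, haj, hac⟩, hjK, hjsub, fun h => absurd h hm⟩
  have hjnon : ∀ p k, (bset u (jseqS u O (C p) k) ∩ C p).Nonempty := by
    intro p k
    induction k with
    | zero =>
      simp only [jseqS]
      rw [dif_pos (hex0 p)]
      exact Nat.find_spec (hex0 p)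
    | succ k ih =>
      have h := hexS p k _ ih
      simp only [jseqS]
      rw [dif_pos h]
      exact (Nat.find_spec h).1
  have hjcond : ∀ p k, condS u O (C p) k (jseqS u O (C p) k) (jseqS u O (C p) (k + 1)) := by
    intro p k
    have h := hexS p k _ (hjnon p k)
    simp only [jseqS]
    rw [dif_pos h]
    exact Nat.find_spec h
  -- the approximating sequence of centers and its limit
  set w : P → ℕ → P := fun p k => u (Nat.unpair (jseqS u O (C p) k)).1 with hw
  have hwmem : ∀ p k, w p k ∈ bset u (jseqS u O (C p) k) := fun p k => hbctr _
  have hchain : ∀ p k, closure (bset u (jseqS u O (C p) (k + 1))) ⊆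
      bset u (jseqS u O (C p) k) := fun p k => (hjcond p k).2.2.1
  have hmono : ∀ p k n, k ≤ n →
      bset u (jseqS u O (C p) n) ⊆ bset u (jseqS u O (C p) k) := by
    intro p k n h
    induction h with
    | refl => exact subset_rfl
    | step h ih => exact (subset_closure.trans (hchain p _)).trans ih
  have hsmallball : ∀ p k z, z ∈ bset u (jseqS u O (C p) (k + 1)) →
      dist z (w p (k + 1)) < (1 / 2 : ℝ) ^ (k + 1) := by
    intro p k z hz
    have hrad : (1 / 2 : ℝ) ^ (Nat.unpair (jseqS u O (C p) (k + 1))).2 ≤ (1 / 2 : ℝ) ^ (k + 1) :=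
      pow_le_pow_of_le_one (by norm_num) (by norm_num) (hjcond p k).2.1
    exact lt_of_lt_of_le (mem_ball.1 hz) hrad
  have hcauchy : ∀ p, CauchySeq (w p) := by
    intro p
    rw [Metric.cauchySeq_iff']
    intro ε hε
    obtain ⟨N, hN⟩ := exists_pow_lt_of_lt_one hε (by norm_num : (1 / 2 : ℝ) < 1)
    refine ⟨N + 1, fun n hn => ?_⟩
    have h1 : w p n ∈ bset u (jseqS u O (C p) (N + 1)) := hmono p _ _ hn (hwmem p n)
    have h2 := hsmallball p N _ h1
    have h3 : (1 / 2 : ℝ) ^ (N + 1) ≤ (1 / 2 : ℝ) ^ N :=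
      pow_le_pow_of_le_one (by norm_num) (by norm_num) (Nat.le_succ N)
    exact lt_of_lt_of_le h2 (h3.trans (le_of_lt hN))
  set F : Set P → P :=
    fun c => limUnder atTop (fun k => u (Nat.unpair (jseqS u O c k)).1) with hF
  set S : P → P := fun p => F (C p) with hS
  have hlim : ∀ p, Tendsto (w p) atTop (𝓝 (S p)) := fun p => (hcauchy p).tendsto_limUnder
  have hclos : ∀ p k, S p ∈ closure (bset u (jseqS u O (C p) k)) := by
    intro p k
    apply mem_closure_of_tendsto (hlim p)
    filter_upwards [eventually_ge_atTop k] with n hn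
    exact hmono p k n hn (hwmem p n)
  -- density of the Vaught-style witnesses
  have hdense : ∀ p n m, (bset u m ∩ C p).Nonempty →
      ∃ r, r ∈ bset u m ∩ C p ∧ (r, S p) ∈ O n := by
    intro p n m hm
    have hc := hjcond p (Nat.pair n m)
    rw [condS] at hc
    simp only [Nat.unpair_pair] at hc
    obtain ⟨i, i', hbox, hcl, ⟨r, ⟨hrm, hri⟩, hrc⟩⟩ := hc.2.2.2 hm
    refine ⟨r, ⟨hrm, hrc⟩, hbox ⟨hri, hcl (hclos p _)⟩⟩
  -- the limit point is in the class
  have hSmem : ∀ p, E p (S p) := by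
    intro p
    set W : ℕ → Set P := fun n => {r | (p, r) ∈ O n} ∩ {r | (r, S p) ∈ O n} with hW
    have hWo : ∀ n, IsOpen (W n) := by
      intro n
      apply IsOpen.inter
      · exact (hO n).preimage (Continuous.prodMk_right p)
      · exact (hO n).preimage (continuous_id.prodMk continuous_const)
    have hWd : ∀ n, ∀ x ∈ C p, ∀ ε > 0, ∃ y ∈ C p, dist y x < ε ∧ y ∈ W n := by
      intro n x hx ε hε
      obtain ⟨m, _, hxm, hmsub⟩ := hbsmall x (Metric.ball x ε) isOpen_ball
        (mem_ball_self hε) 0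
      obtain ⟨r, ⟨hrm, hrc⟩, hrO⟩ := hdense p n m ⟨x, hxm, hx⟩
      refine ⟨r, hrc, ?_, hEsub n p r hrc, hrO⟩
      exact mem_ball.1 (hmsub (subset_closure hrm))
    obtain ⟨r, hr⟩ := baire_pick (C p) ⟨p, hrefl p⟩ W hWo hWd
    have h1 : E p r := (hEiff p r).mpr fun n => (hr n).1
    have h2 : E r (S p) := (hEiff r (S p)).mpr fun n => (hr n).2
    exact htrans _ _ _ h1 h2
  -- measurability
  have hcondmeas : ∀ k l j, MeasurableSet {p | condS u O (C p) k l j} := by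
    intro k l j
    have heq : {p | condS u O (C p) k l j} =
        ({p | (bset u j ∩ C p).Nonempty} ∩ ({p | k + 1 ≤ (Nat.unpair j).2} ∩
          ({p | closure (bset u j) ⊆ bset u l} ∩
          (({p | (bset u (Nat.unpair k).2 ∩ C p).Nonempty})ᶜ ∪
            ⋃ i, ⋃ i', ({p : P | bset u i ×ˢ bset u i' ⊆ O (Nat.unpair k).1 ∧
              closure (bset u j) ⊆ bset u i'} ∩
              {p | ((bset u (Nat.unpair k).2 ∩ bset u i) ∩ C p).Nonempty}))))) := by
      ext p
      simp only [condS, mem_inter_iff, mem_setOf_eq, mem_union, mem_compl_iff, mem_iUnion]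
      constructor
      · rintro ⟨h1, h2, h3, h4⟩
        refine ⟨h1, h2, h3, ?_⟩
        by_cases hD : (bset u (Nat.unpair k).2 ∩ C p).Nonempty
        · obtain ⟨i, i', ha, hb, hcx⟩ := h4 hD
          exact Or.inr ⟨i, i', ⟨ha, hb⟩, hcx⟩
        · exact Or.inl hD
      · rintro ⟨h1, h2, h3, h4⟩
        refine ⟨h1, h2, h3, fun hD => ?_⟩
        rcases h4 with hD' | ⟨i, i', ⟨ha, hb⟩, hcx⟩
        · exact absurd hD hD'
        · exact ⟨i, i', ha, hb, hcx⟩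
    rw [heq]
    refine ((hNopen _ (hbopen j)).measurableSet).inter
      ((MeasurableSet.const _).inter ((MeasurableSet.const _).inter
        (((hNopen _ (hbopen _)).measurableSet.compl).union
          (MeasurableSet.iUnion fun i => MeasurableSet.iUnion fun i' =>
            (MeasurableSet.const _).inter
              (hNopen _ ((hbopen _).inter (hbopen _))).measurableSet))))
  have hjmeas : ∀ k, Measurable fun p => jseqS u O (C p) k := by
    intro k
    induction k with
    | zero =>
      apply measurable_to_countable'
      intro j
      have heq : (fun p => jseqS u O (C p) 0) ⁻¹' {j} =
          {p | (bset u j ∩ C p).Nonempty} ∩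
            ⋂ j' ∈ Set.Iio j, {p | (bset u j' ∩ C p).Nonempty}ᶜ := by
        ext p
        simp only [mem_preimage, mem_singleton_iff, mem_inter_iff, mem_setOf_eq,
          mem_iInter, mem_compl_iff, mem_Iio, jseqS]
        rw [dif_pos (hex0 p)]
        rw [Nat.find_eq_iff (hex0 p)]
      rw [heq]
      exact ((hNopen _ (hbopen j)).measurableSet).inter
        (MeasurableSet.biInter (to_countable _)
          fun j' _ => ((hNopen _ (hbopen j')).measurableSet).compl)
    | succ k ih =>
      apply measurable_to_countable'
      intro j
      have heq : (fun p => jseqS u O (C p) (k + 1)) ⁻¹' {j} =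
          ⋃ l, ((fun p => jseqS u O (C p) k) ⁻¹' {l}) ∩
            ({p | condS u O (C p) k l j} ∩
              ⋂ j' ∈ Set.Iio j, {p | condS u O (C p) k l j'}ᶜ) := by
        ext p
        simp only [mem_preimage, mem_singleton_iff, mem_iUnion, mem_inter_iff,
          mem_setOf_eq, mem_iInter, mem_compl_iff, mem_Iio]
        constructor
        · intro h
          refine ⟨jseqS u O (C p) k, rfl, ?_⟩
          have hex := hexS p k _ (hjnon p k)
          simp only [jseqS] at h
          rw [dif_pos hex] at h
          rw [Nat.find_eq_iff hex] at h
          exact ⟨h.1, fun j' hj' => h.2 j' hj'⟩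
        · rintro ⟨l, hl, h1, h2⟩
          have hl' : jseqS u O (C p) k = l := hl
          have hex := hexS p k l (hl' ▸ hjnon p k)
          simp only [jseqS]
          rw [hl', dif_pos hex]
          rw [Nat.find_eq_iff hex]
          exact ⟨h1, fun j' hj' => h2 j' hj'⟩
      rw [heq]
      exact MeasurableSet.iUnion fun l => (ih (measurableSet_singleton l)).inter
        ((hcondmeas k l j).inter (MeasurableSet.biInter (to_countable _)
          fun j' _ => (hcondmeas k l j').compl))
  have hSmeas : Measurable S := by
    apply measurable_of_tendsto_metrizable (f := fun k p => w p k)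
    · intro k
      exact (measurable_from_nat (f := fun n => u (Nat.unpair n).1)).comp (hjmeas k)
    · rw [tendsto_pi_nhds]
      exact fun p => hlim p
  refine ⟨S, hSmeas, fun p => hsymm _ _ (hSmem p), fun p q => ⟨?_, ?_⟩⟩
  · intro h
    show F (C p) = F (C q)
    rw [hCC p q h]
  · intro h
    have h1 : E p (S p) := hSmem p
    have h2 : E (S q) q := hsymm _ _ (hSmem q)
    rw [h] at h1
    exact htrans _ _ _ h1 h2

end Selector

end HatSel

theorem hatOrbitRel_gdelta_selector {G X : Type*} [Group G] [TopologicalSpace G]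
    [IsTopologicalGroup G] [PolishSpace G] [TopologicalSpace X] [PolishSpace X]
    [MeasurableSpace G] [BorelSpace G] [MeasurableSpace X] [BorelSpace X]
    (pa : PartialAction G X)
    (hdom : ∀ g, IsOpen (pa.dom g))
    (hcont : ContinuousOn (fun p : G × X => pa.act p.1 p.2) {p : G × X | p.2 ∈ pa.dom p.1})
    (hGδ : IsGδ {p : G × X | p.2 ∈ pa.dom p.1}) :
    IsGδ {pq : (G × X) × (G × X) | pa.hatOrbitRel pq.1 pq.2} ∧
    ∃ S : G × X → G × X, Measurable S ∧ (∀ p, pa.hatOrbitRel (S p) p) ∧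
      (∀ p q, pa.hatOrbitRel p q ↔ S p = S q) := by
  refine ⟨HatSel.hat_gdelta pa hcont hGδ, ?_⟩
  by_cases hne : Nonempty (G × X)
  · letI := TopologicalSpace.upgradeIsCompletelyMetrizable (G × X)
    exact HatSel.selector_aux pa.hatOrbitRel (HatSel.hat_refl pa)
      (fun p q h => HatSel.hat_symm pa h) (fun p q r h1 h2 => HatSel.hat_trans pa h1 h2)
      (HatSel.hat_gdelta pa hcont hGδ) (HatSel.hat_open pa hdom hcont)
  · rw [not_nonempty_iff] at hne
    exact ⟨id, measurable_id, fun p => (hne.false p).elim, fun p q => (hne.false p).elim⟩
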